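/- Let n, t ≥ 0 and p ≥ 1 be integers, let S ⊆ [n] with |S| = k, and let 𝐛 ∈ (ℤ/pℤ)^n satisfy ∅ ≠ supp(𝐛) ⊆ S. Then p · |{(𝐢,𝐱) : 𝐢 ∈ S^t, 𝐱 ∈ (ℤ/pℤ)^t, ms(𝐢,𝐱) = 𝐛}| ≤ (p + k^t) · |{(𝐢,𝐱) : 𝐢 ∈ supp(𝐛)^t, 𝐱 ∈ (ℤ/pℤ)^t, ms(𝐢,𝐱) = 𝐛}|. -/

import Mathlib

open Finset

/-- The modular signature of a pair of sequences `i ∈ [n]^t`, `x ∈ (ℤ/pℤ)^t`: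
its `q`-th coordinate is `∑_{r : i r = q} x r (mod p)`. -/
def ms {n t p : ℕ} (i : Fin t → Fin n) (x : Fin t → ZMod p) : Fin n → ZMod p :=
  fun q => ∑ r ∈ Finset.univ.filter (fun r => i r = q), x r

/-- The support of `b ∈ (ℤ/pℤ)^n`: the set of coordinates with nonzero entry. -/
def msupp {n p : ℕ} (b : Fin n → ZMod p) : Finset (Fin n) :=
  Finset.univ.filter (fun q => b q ≠ 0)

section FiberCard

variable {G H : Type*} [AddCommGroup G] [AddCommGroup H] [Fintype G] [Fintype H]
  [DecidableEq G] [DecidableEq H]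

omit [Fintype H] [DecidableEq G] in
lemma fiber_card_eq (φ : G →+ H) (c c' : H) (hc : ∃ d, φ d = c' - c) :
    (univ.filter fun x => φ x = c).card = (univ.filter fun x => φ x = c').card := by
  obtain ⟨d, hd⟩ := hc
  apply Finset.card_bij' (fun x _ => x + d) (fun x _ => x - d)
  · intro a ha
    simp only [mem_filter, mem_univ, true_and] at ha ⊢
    rw [map_add, ha, hd]; abel
  · intro a ha
    simp only [mem_filter, mem_univ, true_and] at ha ⊢
    rw [map_sub, ha, hd]; abel
  · intro a _; abel
  · intro a _; abel

omit [DecidableEq G] in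
lemma fiber_card (φ : G →+ H) (hφ : Function.Surjective φ) (c : H) :
    (univ.filter fun x => φ x = c).card * Fintype.card H = Fintype.card G := by
  classical
  have h := Finset.card_eq_sum_card_fiberwise (f := φ) (s := (univ : Finset G)) (t := univ)
    (fun x _ => mem_univ _)
  rw [card_univ] at h
  rw [h, Fintype.card, Finset.card_eq_sum_ones (univ : Finset H), Finset.mul_sum]
  apply Finset.sum_congr rfl
  intro c' _
  rw [mul_one]
  exact fiber_card_eq φ c c' (hφ _)

end FiberCard

lemma countX {n t p : ℕ} [NeZero p] (i : Fin t → Fin n) (b : Fin n → ZMod p)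
    (hsub : msupp b ⊆ Finset.image i Finset.univ) :
    (univ.filter fun x : Fin t → ZMod p => ms i x = b).card
      = p ^ (t - (Finset.image i Finset.univ).card) := by
  classical
  set I := Finset.image i Finset.univ with hI
  let φ : (Fin t → ZMod p) →+ (I → ZMod p) :=
    { toFun := fun x q => ∑ r ∈ univ.filter (fun r => i r = (q : Fin n)), x r
      map_zero' := by funext q; simp
      map_add' := by intro x y; funext q; simp [Finset.sum_add_distrib] }
  have hmem : ∀ r, i r ∈ I := fun r => Finset.mem_image_of_mem i (mem_univ r)
  have hsurj : Function.Surjective φ := by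
    intro c
    set rep : I → Fin t := fun q => (Finset.mem_image.mp q.2).choose with hrepdef
    have hrep : ∀ q : I, i (rep q) = (q : Fin n) := fun q => (Finset.mem_image.mp q.2).choose_spec.2
    refine ⟨fun r => if r = rep ⟨i r, hmem r⟩ then c ⟨i r, hmem r⟩ else 0, ?_⟩
    funext q
    show (∑ r ∈ univ.filter (fun r => i r = (q : Fin n)),
      if r = rep ⟨i r, hmem r⟩ then c ⟨i r, hmem r⟩ else 0) = c q
    rw [Finset.sum_congr rfl (fun r hr => ?_), Finset.sum_ite_eq' _ (rep q) (fun _ => c q)]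
    · simp [hrep q]
    · have hiq : i r = (q : Fin n) := by simpa using hr
      have heq : (⟨i r, hmem r⟩ : I) = q := Subtype.ext hiq
      rw [heq]
  have hset : (univ.filter fun x : Fin t → ZMod p => ms i x = b)
      = (univ.filter fun x => φ x = fun q : I => b q) := by
    ext x
    simp only [mem_filter, mem_univ, true_and]
    constructor
    · intro h; funext q; exact congrFun h q
    · intro h; funext q
      by_cases hq : q ∈ I
      · exact congrFun h ⟨q, hq⟩
      · have h0 : ms i x q = 0 := by
          apply Finset.sum_eq_zero
          intro r hr
          exact absurd (by simpa using hr : i r = q) (fun he => hq (he ▸ hmem r))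
        have hb0 : b q = 0 := by
          by_contra hbq
          exact hq (hsub (by simp [msupp, hbq]))
        rw [h0, hb0]
  have hcard := fiber_card φ hsurj (fun q : I => b q)
  rw [← hset] at hcard
  have h1 : Fintype.card (I → ZMod p) = p ^ I.card := by
    rw [Fintype.card_fun, ZMod.card, Fintype.card_coe]
  have h2 : Fintype.card (Fin t → ZMod p) = p ^ t := by
    rw [Fintype.card_fun, ZMod.card, Fintype.card_fin]
  have hle : I.card ≤ t := by
    calc I.card ≤ (univ : Finset (Fin t)).card := Finset.card_image_le
    _ = t := by simp
  rw [h1, h2] at hcard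
  have : p ^ (t - I.card) * p ^ I.card = p ^ t := by
    rw [← pow_add, Nat.sub_add_cancel hle]
  exact Nat.eq_of_mul_eq_mul_right
    (Nat.pow_pos (Nat.pos_of_ne_zero (NeZero.ne p))) (hcard.trans this.symm)

lemma countX0 {n t p : ℕ} [NeZero p] (i : Fin t → Fin n) (b : Fin n → ZMod p)
    (hsub : ¬ msupp b ⊆ Finset.image i Finset.univ) :
    (univ.filter fun x : Fin t → ZMod p => ms i x = b).card = 0 := by
  rw [Finset.card_eq_zero, Finset.filter_eq_empty_iff]
  intro x _ hx
  apply hsub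
  intro q hq
  have hbq : b q ≠ 0 := by simpa [msupp] using hq
  have hne : ms i x q ≠ 0 := by rw [hx]; exact hbq
  have : (univ.filter (fun r => i r = q)).Nonempty := by
    by_contra hcon
    rw [Finset.not_nonempty_iff_eq_empty] at hcon
    exact hne (by simp [ms, hcon])
  obtain ⟨r, hr⟩ := this
  exact Finset.mem_image.mpr ⟨r, mem_univ r, by simpa using hr⟩

lemma prod_card {α β : Type*} [Fintype α] [Fintype β] [DecidableEq α]
    (Q : α → Prop) (R : α → β → Prop) [DecidablePred Q] [∀ a, DecidablePred (R a)] :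
    (univ.filter fun ab : α × β => Q ab.1 ∧ R ab.1 ab.2).card
      = ∑ a ∈ univ.filter Q, (univ.filter (R a)).card := by
  classical
  have h : (univ.filter fun ab : α × β => Q ab.1 ∧ R ab.1 ab.2)
      = (univ.filter Q).biUnion (fun a => {a} ×ˢ univ.filter (R a)) := by
    ext ⟨a, c⟩
    simp only [mem_filter, mem_univ, true_and, mem_biUnion, mem_product, mem_singleton]
    constructor
    · rintro ⟨h1, h2⟩; exact ⟨a, h1, rfl, h2⟩
    · rintro ⟨a', h1, rfl, h2⟩; exact ⟨h1, h2⟩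
  rw [h, Finset.card_biUnion]
  · apply Finset.sum_congr rfl
    intro a _
    rw [Finset.card_product, Finset.card_singleton, one_mul]
  · intro a _ a' _ hne
    apply Finset.disjoint_left.mpr
    rintro ⟨x, y⟩ hx hy
    simp only [mem_product, mem_singleton] at hx hy
    exact hne (hx.1 ▸ hy.1 ▸ rfl)

theorem count_ms_overlap_bound (n t p : ℕ) [NeZero p]
    (S : Finset (Fin n)) (k : ℕ) (hk : S.card = k)
    (b : Fin n → ZMod p) (hb : (msupp b).Nonempty) (hbS : msupp b ⊆ S) :
    p * (Finset.univ.filter (fun ix : (Fin t → Fin n) × (Fin t → ZMod p) =>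
        (∀ r, ix.1 r ∈ S) ∧ ms ix.1 ix.2 = b)).card
    ≤ (p + k ^ t) *
      (Finset.univ.filter (fun ix : (Fin t → Fin n) × (Fin t → ZMod p) =>
        (∀ r, ix.1 r ∈ msupp b) ∧ ms ix.1 ix.2 = b)).card := by
  classical
  have hp : 0 < p := Nat.pos_of_ne_zero (NeZero.ne p)
  set s := (msupp b).card with hs
  set F : (Fin t → Fin n) → ℕ :=
    fun i => (univ.filter fun x : Fin t → ZMod p => ms i x = b).card with hF
  set IS := univ.filter (fun i : Fin t → Fin n => ∀ r, i r ∈ S) with hIS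
  set Isupp := univ.filter (fun i : Fin t → Fin n => ∀ r, i r ∈ msupp b) with hIsupp
  have e1 : (Finset.univ.filter (fun ix : (Fin t → Fin n) × (Fin t → ZMod p) =>
      (∀ r, ix.1 r ∈ S) ∧ ms ix.1 ix.2 = b)).card = ∑ i ∈ IS, F i :=
    prod_card (fun i => ∀ r, i r ∈ S) (fun i x => ms i x = b)
  have e2 : (Finset.univ.filter (fun ix : (Fin t → Fin n) × (Fin t → ZMod p) =>
      (∀ r, ix.1 r ∈ msupp b) ∧ ms ix.1 ix.2 = b)).card = ∑ i ∈ Isupp, F i :=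
    prod_card (fun i => ∀ r, i r ∈ msupp b) (fun i x => ms i x = b)
  rw [e1, e2]
  set A0 := IS.filter (fun i => Finset.image i Finset.univ = msupp b) with hA0
  set A2 := IS.filter (fun i => msupp b ⊆ Finset.image i Finset.univ ∧
    Finset.image i Finset.univ ≠ msupp b) with hA2
  set P := p ^ (t - s) with hP
  -- decompose the S-sum
  have hsplit : ∑ i ∈ IS, F i = ∑ i ∈ A0, F i + ∑ i ∈ A2, F i := by
    have h1 : ∑ i ∈ IS.filter (fun i => msupp b ⊆ Finset.image i Finset.univ), F i
        = ∑ i ∈ IS, F i := by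
      apply Finset.sum_filter_of_ne
      intro i _ hFi
      by_contra hcon
      exact hFi (countX0 i b hcon)
    rw [← h1, ← Finset.sum_filter_add_sum_filter_not _
      (fun i => Finset.image i Finset.univ = msupp b)]
    congr 1
    · congr 1
      ext i
      simp only [Finset.mem_filter, hA0]
      constructor
      · rintro ⟨⟨h1, _⟩, h3⟩; exact ⟨h1, h3⟩
      · rintro ⟨h1, h3⟩; exact ⟨⟨h1, h3 ▸ Finset.Subset.refl _⟩, h3⟩
    · congr 1
      ext i
      simp only [Finset.mem_filter, hA2]
      tauto
  have hA0F : ∀ i ∈ A0, F i = P := by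
    intro i hi
    have him : Finset.image i Finset.univ = msupp b := (mem_filter.mp hi).2
    have h := countX i b (him ▸ Finset.Subset.refl _)
    rw [him] at h
    exact h
  have hA0sum : ∑ i ∈ A0, F i = A0.card * P := by
    rw [Finset.sum_congr rfl hA0F, Finset.sum_const, smul_eq_mul]
  -- the supp-side sum
  have hRHSsum : ∑ i ∈ Isupp, F i = A0.card * P := by
    have h1 : ∑ i ∈ Isupp.filter (fun i => msupp b ⊆ Finset.image i Finset.univ), F i
        = ∑ i ∈ Isupp, F i := by
      apply Finset.sum_filter_of_ne
      intro i _ hFi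
      by_contra hcon
      exact hFi (countX0 i b hcon)
    have h2 : Isupp.filter (fun i => msupp b ⊆ Finset.image i Finset.univ) = A0 := by
      ext i
      simp only [hA0, hIsupp, hIS, mem_filter, mem_univ, true_and]
      constructor
      · rintro ⟨hval, hsub⟩
        have him : Finset.image i Finset.univ ⊆ msupp b := by
          intro q hq
          obtain ⟨r, _, rfl⟩ := Finset.mem_image.mp hq
          exact hval r
        exact ⟨fun r => hbS (hval r), Finset.Subset.antisymm him hsub⟩
      · rintro ⟨hval, him⟩
        refine ⟨fun r => ?_, him ▸ Finset.Subset.refl _⟩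
        have : i r ∈ Finset.image i Finset.univ := Finset.mem_image_of_mem i (mem_univ r)
        rwa [him] at this
    rw [← h1, h2, hA0sum]
  rw [hsplit, hRHSsum]
  -- bound the A2 terms
  have hterm : ∀ i ∈ A2, p * F i ≤ P := by
    intro i hi
    obtain ⟨hiIS, hsub, hne⟩ : i ∈ IS ∧ msupp b ⊆ Finset.image i Finset.univ ∧
        Finset.image i Finset.univ ≠ msupp b := by
      have := mem_filter.mp hi; exact ⟨this.1, this.2.1, this.2.2⟩
    set c := (Finset.image i Finset.univ).card with hc
    have hsc : s < c := by
      refine lt_of_le_of_ne (Finset.card_le_card hsub) (fun h => hne ?_)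
      exact (Finset.eq_of_subset_of_card_le hsub h.ge).symm
    have hct : c ≤ t := by
      calc c ≤ (univ : Finset (Fin t)).card := Finset.card_image_le
      _ = t := by simp
    have hFi : F i = p ^ (t - c) := by rw [hc]; exact countX i b hsub
    rw [hFi]
    calc p * p ^ (t - c) = p ^ (t - c + 1) := by rw [pow_succ, mul_comm]
    _ ≤ p ^ (t - s) := Nat.pow_le_pow_right hp (by omega)
  have hA2bound : p * ∑ i ∈ A2, F i ≤ A2.card * P := by
    rw [Finset.mul_sum]
    calc ∑ i ∈ A2, p * F i ≤ ∑ _i ∈ A2, P := Finset.sum_le_sum hterm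
    _ = A2.card * P := by rw [Finset.sum_const, smul_eq_mul]
  have hIScard : IS.card = k ^ t := by
    have h1 : IS = Fintype.piFinset (fun _ : Fin t => S) := by
      ext i; simp [hIS, Fintype.mem_piFinset]
    rw [h1, Fintype.card_piFinset]
    simp [hk]
  have hA2k : A2.card ≤ k ^ t := by
    calc A2.card ≤ IS.card := Finset.card_le_card (Finset.filter_subset _ _)
    _ = k ^ t := hIScard
  rcases A2.eq_empty_or_nonempty with hA2e | hA2ne
  · rw [hA2e, Finset.sum_empty, add_zero, hA0sum]
    exact Nat.mul_le_mul_right _ (Nat.le_add_right p (k ^ t))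
  · -- A2 nonempty ⟹ s < t, so A0 is nonempty
    obtain ⟨i1, hi1⟩ := hA2ne
    have hst : s ≤ t := by
      obtain ⟨_, hsub, _⟩ : i1 ∈ IS ∧ msupp b ⊆ Finset.image i1 Finset.univ ∧
          Finset.image i1 Finset.univ ≠ msupp b := by
        have := mem_filter.mp hi1; exact ⟨this.1, this.2.1, this.2.2⟩
      calc s ≤ (Finset.image i1 Finset.univ).card := Finset.card_le_card hsub
      _ ≤ (univ : Finset (Fin t)).card := Finset.card_image_le
      _ = t := by simp
    obtain ⟨q0, hq0⟩ := hb
    set e := (msupp b).orderIsoOfFin hs.symm with he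
    set i0 : Fin t → Fin n := fun r => if h : (r : ℕ) < s then (e ⟨(r : ℕ), h⟩ : Fin n) else q0
      with hi0
    have hi0mem : ∀ r, i0 r ∈ msupp b := by
      intro r
      rw [hi0]
      by_cases h : (r : ℕ) < s
      · simp only [dif_pos h]; exact (e ⟨(r : ℕ), h⟩).2
      · simp only [dif_neg h]; exact hq0
    have hi0img : Finset.image i0 Finset.univ = msupp b := by
      apply Finset.Subset.antisymm
      · intro q hq
        obtain ⟨r, _, rfl⟩ := Finset.mem_image.mp hq
        exact hi0mem r
      · intro q hq
        obtain ⟨j, hj⟩ := e.surjective ⟨q, hq⟩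
        refine Finset.mem_image.mpr ⟨⟨(j : ℕ), lt_of_lt_of_le j.2 hst⟩, mem_univ _, ?_⟩
        have hjs : ((⟨(j : ℕ), lt_of_lt_of_le j.2 hst⟩ : Fin t) : ℕ) < s := j.2
        rw [hi0]
        simp only [dif_pos hjs]
        have : (⟨((⟨(j : ℕ), lt_of_lt_of_le j.2 hst⟩ : Fin t) : ℕ), hjs⟩ : Fin s) = j := by
          apply Fin.ext; rfl
        rw [this, hj]
    have hi0A0 : i0 ∈ A0 := by
      rw [hA0, hIS]
      refine mem_filter.mpr ⟨mem_filter.mpr ⟨mem_univ _, fun r => hbS (hi0mem r)⟩, hi0img⟩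
    have hN : 1 ≤ A0.card := Finset.card_pos.mpr ⟨i0, hi0A0⟩
    calc p * (∑ i ∈ A0, F i + ∑ i ∈ A2, F i)
        = p * (A0.card * P) + p * ∑ i ∈ A2, F i := by rw [hA0sum]; ring
      _ ≤ p * (A0.card * P) + A2.card * P := Nat.add_le_add_left hA2bound _
      _ ≤ p * (A0.card * P) + k ^ t * (A0.card * P) := by
          apply Nat.add_le_add_left
          exact Nat.mul_le_mul hA2k (Nat.le_mul_of_pos_left P hN)
      _ = (p + k ^ t) * (A0.card * P) := by ring
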